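/- The Jacobian cocycle identity: define c(Z, g) = ∏_{j=1}^{n−1} det([Zg]_{jj})^{−2} for Z upper unitriangular and g ∈ GL(n,ℂ) with all leading minors of Zg nonzero. Then c satisfies the chain identity c(Z, gh) = c(Z, g) · c(Z^{[g]}, h) whenever both sides are defined, where Z^{[g]} is the unipotent factor of the Gauss decomposition of Zg. -/

import Mathlib

/-- The leading principal `k × k` corner determinant of an `N × N` matrix
(for `k ≤ N`; we use `min k N` to keep the definition total). -/
noncomputable def cornerDet {N : ℕ} (M : Matrix (Fin N) (Fin N) ℂ) (k : ℕ) : ℂ :=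
  (M.submatrix (Fin.castLE (min_le_right k N)) (Fin.castLE (min_le_right k N))).det

/-- The Jacobian cocycle `c(Z, g) = ∏_{j=1}^{n−1} det([Zg]_{jj})^{−2}`. -/
noncomputable def jacCocycle (n : ℕ) (Z g : Matrix (Fin n) (Fin n) ℂ) : ℂ :=
  ∏ j ∈ Finset.Icc 1 (n - 1), cornerDet (Z * g) j ^ (-2 : ℤ)

lemma corner_mul_lower {n : ℕ} (k : ℕ) (b M : Matrix (Fin n) (Fin n) ℂ)
    (hb : ∀ i j, i < j → b i j = 0) :
    cornerDet (b * M) k = cornerDet b k * cornerDet M k := by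
  unfold cornerDet
  rw [← Matrix.det_mul]
  congr 1
  ext i j
  simp only [Matrix.submatrix_apply, Matrix.mul_apply]
  set f : Fin (min k n) → Fin n := Fin.castLE (min_le_right k n) with hf
  have key : ∑ x ∈ Finset.univ.map (Fin.castLEEmb (min_le_right k n)),
      b (f i) x * M x (f j) = ∑ x : Fin n, b (f i) x * M x (f j) := by
    refine Finset.sum_subset (Finset.subset_univ _) ?_
    intro x _ hx
    have hxk : ¬ x.val < min k n := by
      intro hlt
      exact hx (Finset.mem_map.2 ⟨⟨x.val, hlt⟩, Finset.mem_univ _, Fin.ext rfl⟩)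
    have hlt : f i < x := by
      have h1 : (f i).val = i.val := rfl
      have h2 : i.val < min k n := i.isLt
      exact Fin.lt_def.2 (by omega)
    rw [hb _ _ hlt, zero_mul]
  rw [← key, Finset.sum_map]
  rfl

lemma corner_unitri {n : ℕ} (k : ℕ) (Z : Matrix (Fin n) (Fin n) ℂ)
    (hZ1 : ∀ i, Z i i = 1) (hZ0 : ∀ i j, j < i → Z i j = 0) :
    cornerDet Z k = 1 := by
  unfold cornerDet
  rw [Matrix.det_of_upperTriangular]
  · simp [Matrix.submatrix_apply, hZ1]
  · intro i j hij
    exact hZ0 _ _ (Fin.lt_def.2 (Fin.lt_def.1 hij))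

/-- the chain identity `c(Z, gh) = c(Z, g) · c(Z^{[g]}, h)` for the
Jacobian cocycle `c(Z, g) = ∏_{j=1}^{n−1} det([Zg]_{jj})^{−2}`, whenever both
sides are defined (`Z` upper unitriangular, `Zg = b Z'` a Gauss decomposition
with `b` lower triangular invertible and `Z' = Z^{[g]}` upper unitriangular,
and all leading principal minors of `Zg` and of `Zgh` nonzero). -/
theorem jacobian_cocycle_chain (n : ℕ) (Z Z' b g h : Matrix (Fin n) (Fin n) ℂ)
    (hZ1 : ∀ i, Z i i = 1) (hZ0 : ∀ i j, j < i → Z i j = 0)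
    (hb : ∀ i j, i < j → b i j = 0) (hbu : IsUnit b.det)
    (hZ'1 : ∀ i, Z' i i = 1) (hZ'0 : ∀ i j, j < i → Z' i j = 0)
    (hdec : Z * g = b * Z')
    (hminors₁ : ∀ j, 1 ≤ j → j ≤ n → cornerDet (Z * g) j ≠ 0)
    (hminors₂ : ∀ j, 1 ≤ j → j ≤ n → cornerDet (Z * g * h) j ≠ 0) :
    jacCocycle n Z (g * h) = jacCocycle n Z g * jacCocycle n Z' h := by
  unfold jacCocycle
  rw [← Finset.prod_mul_distrib]
  refine Finset.prod_congr rfl ?_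
  intro j hj
  rw [Finset.mem_Icc] at hj
  have hjn : j ≤ n := le_trans hj.2 (Nat.sub_le n 1)
  have hcb : cornerDet (Z * g) j = cornerDet b j := by
    rw [hdec, corner_mul_lower j b Z' hb, corner_unitri j Z' hZ'1 hZ'0, mul_one]
  have hkey : cornerDet (Z * g * h) j = cornerDet (Z * g) j * cornerDet (Z' * h) j := by
    rw [hdec, Matrix.mul_assoc, corner_mul_lower j b (Z' * h) hb, ← hcb, hdec]
  have h1 : cornerDet (Z * g) j ≠ 0 := hminors₁ j hj.1 hjn
  have h2 : cornerDet (Z * g * h) j ≠ 0 := hminors₂ j hj.1 hjn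
  have h3 : cornerDet (Z' * h) j ≠ 0 := by
    intro h0
    rw [h0, mul_zero] at hkey
    exact h2 hkey
  rw [← Matrix.mul_assoc, hkey, mul_zpow]
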